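/- Let (ℒ_t)_{t≥0} be a family of linear maps on n×n complex matrices with ‖ℒ_t(x)‖₁ ≤ Λ ‖x‖₁ for all t and x, where Λ > 0, and let ε be a fixed matrix. Suppose x(t) and y(t) are differentiable matrix-valued functions satisfying ẋ(t) = ℒ_t(x(t)) + ε and ẏ(t) = ℒ_t(y(t)) with x(0) = y(0). Then for every c > 0 and every t ≤ c/Λ, ‖x(t) − y(t)‖₁ ≤ (e^c − 1) ‖ε‖₁ / Λ; equivalently, ‖x(t) − y(t)‖₁ ≤ (e^{Λt} − 1) ‖ε‖₁ / Λ for all t ≥ 0. -/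

import Mathlib

open MeasureTheory Matrix
open scoped ComplexOrder

noncomputable section

attribute [local instance] Matrix.frobeniusNormedAddCommGroup Matrix.frobeniusNormedSpace

/-- The removed Mathlib `Matrix.PosSemidef.sqrt`, with its old definition. -/
def posSemidefSqrtOld {n : ℕ} {M : Matrix (Fin n) (Fin n) ℂ} (hA : M.PosSemidef) :
    Matrix (Fin n) (Fin n) ℂ :=
  hA.isHermitian.eigenvectorUnitary.1 *
    diagonal ((↑) ∘ (fun r : ℝ => Real.sqrt r) ∘ hA.isHermitian.eigenvalues) *
    (star hA.isHermitian.eigenvectorUnitary : Matrix (Fin n) (Fin n) ℂ)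

/-- The trace norm `‖A‖₁ = Tr √(A†A)` of a complex matrix. -/
def traceNorm {n : ℕ} (A : Matrix (Fin n) (Fin n) ℂ) : ℝ :=
  (posSemidefSqrtOld (Matrix.posSemidef_conjTranspose_mul_self A)).trace.re

open scoped NNReal

namespace TNAux
variable {n : ℕ}

def nsq (v : Fin n → ℂ) : ℝ := ∑ i, Complex.normSq (v i)

lemma nsq_nonneg (v : Fin n → ℂ) : 0 ≤ nsq v :=
  Finset.sum_nonneg fun i _ => Complex.normSq_nonneg _

lemma nsq_eq_re (v : Fin n → ℂ) : nsq v = (star v ⬝ᵥ v).re := by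
  simp [nsq, dotProduct, Complex.re_sum, Complex.normSq_apply]

lemma cauchy (u w : Fin n → ℂ) :
    |(star u ⬝ᵥ w).re| ≤ Real.sqrt (nsq u) * Real.sqrt (nsq w) := by
  let u' : EuclideanSpace ℂ (Fin n) := WithLp.toLp 2 u
  let w' : EuclideanSpace ℂ (Fin n) := WithLp.toLp 2 w
  have h1 : star u ⬝ᵥ w = inner ℂ u' w' := by
    simp [dotProduct, PiLp.inner_apply, RCLike.inner_apply, u', w', mul_comm]
  have key : ∀ v : Fin n → ℂ, ‖(WithLp.equiv 2 (Fin n → ℂ)).symm v‖ = Real.sqrt (nsq v) := by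
    intro v
    rw [EuclideanSpace.norm_eq]
    refine congrArg Real.sqrt (Finset.sum_congr rfl fun i _ => ?_)
    show ‖v i‖ ^ 2 = Complex.normSq (v i)
    rw [Complex.sq_norm]
  calc |(star u ⬝ᵥ w).re| ≤ ‖star u ⬝ᵥ w‖ := Complex.abs_re_le_norm _
    _ = ‖(inner ℂ u' w' : ℂ)‖ := by rw [h1]
    _ ≤ ‖u'‖ * ‖w'‖ := norm_inner_le_norm _ _
    _ = _ := by rw [← key u, ← key w]; rfl

lemma diag_entry (U M : Matrix (Fin n) (Fin n) ℂ) (i : Fin n) :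
    (star U * M * U) i i = star (fun k => U k i) ⬝ᵥ (M *ᵥ fun k => U k i) := by
  simp only [Matrix.mul_apply, dotProduct, mulVec, Pi.star_apply,
    Matrix.star_eq_conjTranspose, conjTranspose_apply, Finset.sum_mul, Finset.mul_sum]
  rw [Finset.sum_comm]
  refine Finset.sum_congr rfl fun k _ => Finset.sum_congr rfl fun j _ => by ring

lemma star_mulVec_dot (C A : Matrix (Fin n) (Fin n) ℂ) (v : Fin n → ℂ) :
    star (C *ᵥ v) ⬝ᵥ (A *ᵥ v) = star v ⬝ᵥ ((Cᴴ * A) *ᵥ v) := by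
  rw [star_mulVec, Matrix.dotProduct_mulVec, Matrix.vecMul_vecMul,
    ← Matrix.dotProduct_mulVec]

lemma nsq_mulVec (A : Matrix (Fin n) (Fin n) ℂ) (v : Fin n → ℂ) :
    nsq (A *ᵥ v) = (star v ⬝ᵥ ((Aᴴ * A) *ᵥ v)).re := by
  rw [nsq_eq_re, star_mulVec_dot]

def lam (A : Matrix (Fin n) (Fin n) ℂ) : Fin n → ℝ :=
  (Matrix.posSemidef_conjTranspose_mul_self A).1.eigenvalues

def Umat (A : Matrix (Fin n) (Fin n) ℂ) : Matrix (Fin n) (Fin n) ℂ :=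
  ((Matrix.posSemidef_conjTranspose_mul_self A).1.eigenvectorUnitary : Matrix (Fin n) (Fin n) ℂ)

lemma lam_nonneg (A : Matrix (Fin n) (Fin n) ℂ) (i : Fin n) : 0 ≤ lam A i :=
  (Matrix.posSemidef_conjTranspose_mul_self A).eigenvalues_nonneg i

lemma U_star_mul (A : Matrix (Fin n) (Fin n) ℂ) : star (Umat A) * Umat A = 1 :=
  Matrix.mem_unitaryGroup_iff'.mp
    ((Matrix.posSemidef_conjTranspose_mul_self A).1.eigenvectorUnitary).2

lemma U_mul_star (A : Matrix (Fin n) (Fin n) ℂ) : Umat A * star (Umat A) = 1 :=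
  Matrix.mem_unitaryGroup_iff.mp
    ((Matrix.posSemidef_conjTranspose_mul_self A).1.eigenvectorUnitary).2

lemma spectral (A : Matrix (Fin n) (Fin n) ℂ) :
    Aᴴ * A = Umat A * Matrix.diagonal (Complex.ofReal ∘ lam A) * star (Umat A) :=
  (Matrix.posSemidef_conjTranspose_mul_self A).1.spectral_theorem

lemma spectral' (A : Matrix (Fin n) (Fin n) ℂ) :
    star (Umat A) * (Aᴴ * A) * Umat A = Matrix.diagonal (Complex.ofReal ∘ lam A) := by
  rw [spectral A]
  simp only [← Matrix.mul_assoc]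
  rw [U_star_mul, Matrix.one_mul, Matrix.mul_assoc, U_star_mul, Matrix.mul_one]

lemma trace_UDU (U : Matrix (Fin n) (Fin n) ℂ) (hU : star U * U = 1) (d : Fin n → ℂ) :
    (U * Matrix.diagonal d * star U).trace = ∑ i, d i := by
  rw [Matrix.trace_mul_cycle, hU, Matrix.one_mul, Matrix.trace_diagonal]

lemma traceNorm_eq (A : Matrix (Fin n) (Fin n) ℂ) :
    traceNorm A = ∑ i, Real.sqrt (lam A i) := by
  unfold traceNorm
  rw [show posSemidefSqrtOld (Matrix.posSemidef_conjTranspose_mul_self A)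
      = Umat A * Matrix.diagonal (Complex.ofReal ∘ Real.sqrt ∘ lam A) * star (Umat A) from rfl]
  rw [trace_UDU _ (U_star_mul A)]
  simp [Complex.re_sum]

lemma traceNorm_nonneg (A : Matrix (Fin n) (Fin n) ℂ) : 0 ≤ traceNorm A := by
  rw [traceNorm_eq]; exact Finset.sum_nonneg fun i _ => Real.sqrt_nonneg _

lemma col_nsq_one (A : Matrix (Fin n) (Fin n) ℂ) (i : Fin n) :
    nsq (fun k => Umat A k i) = 1 := by
  have h := diag_entry (Umat A) 1 i
  rw [Matrix.mul_one, Matrix.one_mulVec] at h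
  rw [nsq_eq_re, ← h, U_star_mul]
  simp

lemma col_nsq_A (A : Matrix (Fin n) (Fin n) ℂ) (i : Fin n) :
    nsq (A *ᵥ fun k => Umat A k i) = lam A i := by
  rw [nsq_mulVec, ← diag_entry, spectral']
  simp

/-- Key inequality: if `C` is a contraction then `re tr(Cᴴ A) ≤ ‖A‖₁`. -/
lemma re_trace_le (A C : Matrix (Fin n) (Fin n) ℂ)
    (hC : ∀ v, nsq (C *ᵥ v) ≤ nsq v) :
    ((Cᴴ * A).trace).re ≤ traceNorm A := by
  have htr : (Cᴴ * A).trace = (star (Umat A) * (Cᴴ * A) * Umat A).trace := by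
    rw [Matrix.trace_mul_cycle, ← Matrix.mul_assoc, U_mul_star, Matrix.one_mul]
  rw [htr, traceNorm_eq]
  simp only [Matrix.trace, Matrix.diag_apply, Complex.re_sum]
  refine Finset.sum_le_sum fun i _ => ?_
  rw [diag_entry, ← star_mulVec_dot]
  set col := fun k => Umat A k i with hcol
  calc (star (C *ᵥ col) ⬝ᵥ (A *ᵥ col)).re
      ≤ |(star (C *ᵥ col) ⬝ᵥ (A *ᵥ col)).re| := le_abs_self _
    _ ≤ Real.sqrt (nsq (C *ᵥ col)) * Real.sqrt (nsq (A *ᵥ col)) := cauchy _ _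
    _ ≤ Real.sqrt (nsq col) * Real.sqrt (nsq (A *ᵥ col)) := by
        exact mul_le_mul_of_nonneg_right (Real.sqrt_le_sqrt (hC col)) (Real.sqrt_nonneg _)
    _ = Real.sqrt (lam A i) := by rw [col_nsq_one, col_nsq_A, Real.sqrt_one, one_mul]

lemma dot_conj_aux (U N : Matrix (Fin n) (Fin n) ℂ) (v : Fin n → ℂ) :
    star v ⬝ᵥ ((U * N * star U) *ᵥ v)
      = star (star U *ᵥ v) ⬝ᵥ (N *ᵥ (star U *ᵥ v)) := by
  simp only [← mulVec_mulVec, Matrix.dotProduct_mulVec, star_mulVec,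
    Matrix.star_eq_conjTranspose, conjTranspose_conjTranspose]

lemma dot_diagonal (c : Fin n → ℝ) (w : Fin n → ℂ) :
    star w ⬝ᵥ ((Matrix.diagonal (Complex.ofReal ∘ c)) *ᵥ w)
      = ∑ i, ((c i : ℂ) * (Complex.normSq (w i) : ℂ)) := by
  simp only [dotProduct, mulVec_diagonal, Pi.star_apply, Function.comp_apply]
  refine Finset.sum_congr rfl fun i _ => ?_
  rw [show star (w i) * ((c i : ℂ) * w i) = (c i : ℂ) * (star (w i) * w i) by ring,
    Complex.star_def, Complex.normSq_eq_conj_mul_self]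

lemma nsq_star_U (A : Matrix (Fin n) (Fin n) ℂ) (v : Fin n → ℂ) :
    nsq (star (Umat A) *ᵥ v) = nsq v := by
  rw [nsq_mulVec]
  rw [show (star (Umat A))ᴴ = Umat A from conjTranspose_conjTranspose _, U_mul_star]
  rw [Matrix.one_mulVec, ← nsq_eq_re]

lemma UDU_mul (U : Matrix (Fin n) (Fin n) ℂ) (hU : star U * U = 1) (a b : Fin n → ℂ) :
    (U * Matrix.diagonal a * star U) * (U * Matrix.diagonal b * star U)
      = U * Matrix.diagonal (fun i => a i * b i) * star U := by
  have h1 : (U * Matrix.diagonal a * star U) * (U * Matrix.diagonal b * star U)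
      = U * (Matrix.diagonal a * ((star U * U) * (Matrix.diagonal b * star U))) := by
    simp only [Matrix.mul_assoc]
  rw [h1, hU, Matrix.one_mul, ← Matrix.mul_assoc, ← Matrix.mul_assoc,
    Matrix.mul_assoc U (Matrix.diagonal a) (Matrix.diagonal b), diagonal_mul_diagonal]

lemma star_diag_ofReal (f : Fin n → ℝ) :
    star (Matrix.diagonal (Complex.ofReal ∘ f)) = Matrix.diagonal (Complex.ofReal ∘ f) := by
  ext i j
  rw [Matrix.star_apply]
  rcases eq_or_ne i j with h | h
  · subst h; simp [Complex.conj_ofReal]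
  · rw [Matrix.diagonal_apply_ne _ h, Matrix.diagonal_apply_ne _ (Ne.symm h), star_zero]

lemma exists_contraction (A : Matrix (Fin n) (Fin n) ℂ) :
    ∃ C : Matrix (Fin n) (Fin n) ℂ,
      (∀ v, nsq (C *ᵥ v) ≤ nsq v) ∧ ((Cᴴ * A).trace).re = traceNorm A := by
  classical
  set U := Umat A with hU
  set l := lam A with hl
  set p : Fin n → ℝ := fun i => if l i = 0 then 0 else (Real.sqrt (l i))⁻¹ with hp
  have hpl : ∀ i, p i * l i = Real.sqrt (l i) := by
    intro i
    by_cases h : l i = 0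
    · simp [hp, h]
    · have hlpos : 0 < l i := (lam_nonneg A i).lt_of_ne (Ne.symm h)
      have hs : Real.sqrt (l i) ≠ 0 := ne_of_gt (Real.sqrt_pos.mpr hlpos)
      simp only [hp, if_neg h]
      field_simp
      rw [Real.sq_sqrt hlpos.le]
  set P := U * Matrix.diagonal (Complex.ofReal ∘ p) * star U with hP
  have hPH : Pᴴ = P := by
    rw [hP, ← Matrix.star_eq_conjTranspose, StarMul.star_mul, StarMul.star_mul, star_star, star_diag_ofReal,
      Matrix.mul_assoc]
  have hCtA : (A * P)ᴴ * A
      = U * Matrix.diagonal (Complex.ofReal ∘ (fun i => Real.sqrt (l i))) * star U := by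
    rw [conjTranspose_mul, hPH, Matrix.mul_assoc, hP, spectral A, ← hU, ← hl,
      UDU_mul U (U_star_mul A) _ _]
    have hfun : (fun i => (Complex.ofReal ∘ p) i * (Complex.ofReal ∘ l) i)
        = Complex.ofReal ∘ (fun i => Real.sqrt (l i)) := by
      funext i
      simp only [Function.comp_apply, ← Complex.ofReal_mul]
      rw [hpl i]
    rw [hfun]
  have hCC : (A * P)ᴴ * (A * P)
      = U * Matrix.diagonal (Complex.ofReal ∘ (fun i => Real.sqrt (l i) * p i)) * star U := by
    rw [show (A*P)ᴴ * (A*P) = ((A*P)ᴴ * A) * P from (Matrix.mul_assoc _ _ _).symm, hCtA, hP,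
      UDU_mul U (U_star_mul A) _ _]
    have hfun : (fun i => (Complex.ofReal ∘ (fun j => Real.sqrt (l j))) i * (Complex.ofReal ∘ p) i)
        = Complex.ofReal ∘ (fun i => Real.sqrt (l i) * p i) := by
      funext i
      simp only [Function.comp_apply, ← Complex.ofReal_mul]
    rw [hfun]
  have he : ∀ i, Real.sqrt (l i) * p i ≤ 1 := by
    intro i
    by_cases h : l i = 0
    · simp [hp, h]
    · have hlpos : 0 < l i := (lam_nonneg A i).lt_of_ne (Ne.symm h)
      have hs : 0 < Real.sqrt (l i) := Real.sqrt_pos.mpr hlpos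
      simp only [hp, if_neg h]
      rw [mul_inv_cancel₀ (ne_of_gt hs)]
  refine ⟨A * P, ?_, ?_⟩
  · intro v
    rw [nsq_mulVec, hCC, dot_conj_aux, dot_diagonal]
    set w := star U *ᵥ v with hw
    rw [show nsq v = nsq w from (nsq_star_U A v).symm, nsq, Complex.re_sum]
    refine Finset.sum_le_sum fun i _ => ?_
    rw [show ((Real.sqrt (l i) * p i : ℝ) : ℂ) * (Complex.normSq (w i) : ℂ)
        = (((Real.sqrt (l i) * p i) * Complex.normSq (w i) : ℝ) : ℂ) by push_cast; ring,
      Complex.ofReal_re]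
    calc Real.sqrt (l i) * p i * Complex.normSq (w i)
        ≤ 1 * Complex.normSq (w i) :=
          mul_le_mul_of_nonneg_right (he i) (Complex.normSq_nonneg _)
      _ = _ := one_mul _
  · rw [hCtA, trace_UDU _ (U_star_mul A), traceNorm_eq, ← hl, Complex.re_sum]
    simp

lemma traceNorm_add_le (A B : Matrix (Fin n) (Fin n) ℂ) :
    traceNorm (A + B) ≤ traceNorm A + traceNorm B := by
  obtain ⟨C, hC, htr⟩ := exists_contraction (A + B)
  have hsplit : ((Cᴴ * (A + B)).trace).re = ((Cᴴ * A).trace).re + ((Cᴴ * B).trace).re := by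
    rw [Matrix.mul_add, Matrix.trace_add, Complex.add_re]
  have h1 := re_trace_le A C hC
  have h2 := re_trace_le B C hC
  linarith [htr, hsplit]

lemma traceNorm_smul (c : ℂ) (A : Matrix (Fin n) (Fin n) ℂ) :
    traceNorm (c • A) = ‖c‖ * traceNorm A := by
  have key : ∀ B : Matrix (Fin n) (Fin n) ℂ,
      traceNorm B = (cfc Real.sqrt (Bᴴ * B)).trace.re := by
    intro B
    unfold traceNorm posSemidefSqrtOld
    rw [(Matrix.posSemidef_conjTranspose_mul_self B).1.cfc_eq Real.sqrt, IsHermitian.cfc,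
      Unitary.conjStarAlgAut_apply]
    rfl
  have hsa : IsSelfAdjoint (Aᴴ * A) := (Matrix.posSemidef_conjTranspose_mul_self A).1
  have hM : (c • A)ᴴ * (c • A) = (‖c‖ ^ 2 : ℝ) • (Aᴴ * A) := by
    rw [conjTranspose_smul, Matrix.smul_mul, Matrix.mul_smul, smul_smul, ← Complex.coe_smul]
    congr 1
    rw [Complex.star_def, ← Complex.normSq_eq_conj_mul_self, Complex.normSq_eq_norm_sq]
  rw [key, key, hM, ← cfc_comp_smul (‖c‖ ^ 2 : ℝ) Real.sqrt (Aᴴ * A) (ha := hsa)]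
  have hf : (fun x => Real.sqrt ((‖c‖ ^ 2 : ℝ) • x)) = fun x => ‖c‖ * Real.sqrt x := by
    funext x
    rw [smul_eq_mul, Real.sqrt_mul (by positivity), Real.sqrt_sq (norm_nonneg _)]
  rw [hf, cfc_const_mul ‖c‖ Real.sqrt (Aᴴ * A), Matrix.trace_smul, Complex.smul_re, smul_eq_mul]

lemma traceNorm_zero : traceNorm (0 : Matrix (Fin n) (Fin n) ℂ) = 0 := by
  have := traceNorm_smul 0 (0 : Matrix (Fin n) (Fin n) ℂ)
  simpa using this

lemma traceNorm_neg (A : Matrix (Fin n) (Fin n) ℂ) : traceNorm (-A) = traceNorm A := by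
  have := traceNorm_smul (-1 : ℂ) A
  simpa using this

lemma traceNorm_real_smul (r : ℝ) (A : Matrix (Fin n) (Fin n) ℂ) :
    traceNorm (r • A) = |r| * traceNorm A := by
  have h : r • A = (r : ℂ) • A := by
    ext i j
    simp [Complex.real_smul]
  rw [h, traceNorm_smul]
  simp

lemma traceNorm_sub_le (A B : Matrix (Fin n) (Fin n) ℂ) :
    traceNorm A - traceNorm B ≤ traceNorm (A - B) := by
  have := traceNorm_add_le (A - B) B
  simp only [sub_add_cancel] at this
  linarith

lemma abs_traceNorm_sub_le (A B : Matrix (Fin n) (Fin n) ℂ) :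
    |traceNorm A - traceNorm B| ≤ traceNorm (A - B) := by
  rw [abs_sub_le_iff]
  constructor
  · exact traceNorm_sub_le A B
  · have h := traceNorm_sub_le B A
    rw [show B - A = -(A-B) from (neg_sub A B).symm, traceNorm_neg] at h
    exact h

lemma sum_lam (A : Matrix (Fin n) (Fin n) ℂ) :
    ∑ i, lam A i = ((Aᴴ * A).trace).re := by
  rw [spectral A, trace_UDU _ (U_star_mul A), Complex.re_sum]
  simp

lemma trace_re_eq (A : Matrix (Fin n) (Fin n) ℂ) :
    ((Aᴴ * A).trace).re = ∑ j, ∑ k, Complex.normSq (A k j) := by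
  simp only [Matrix.trace, Matrix.diag_apply, Matrix.mul_apply, conjTranspose_apply,
    Complex.re_sum]
  refine Finset.sum_congr rfl fun j _ => Finset.sum_congr rfl fun k _ => ?_
  rw [show star (A k j) * A k j = (Complex.normSq (A k j) : ℂ) by
    rw [Complex.star_def, Complex.normSq_eq_conj_mul_self], Complex.ofReal_re]

section frob
attribute [local instance] Matrix.frobeniusNormedAddCommGroup Matrix.frobeniusNormedSpace

lemma frob_norm_eq (A : Matrix (Fin n) (Fin n) ℂ) :
    ‖A‖ = Real.sqrt (∑ i, lam A i) := by
  rw [Matrix.frobenius_norm_def, sum_lam, trace_re_eq, Real.sqrt_eq_rpow]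
  congr 1
  rw [Finset.sum_comm]
  refine Finset.sum_congr rfl fun k _ => Finset.sum_congr rfl fun j _ => ?_
  rw [show ((2:ℝ)) = ((2:ℕ):ℝ) by norm_num, Real.rpow_natCast]
  rw [Complex.sq_norm]

lemma traceNorm_le_norm (A : Matrix (Fin n) (Fin n) ℂ) :
    traceNorm A ≤ (n : ℝ) * ‖A‖ := by
  rw [traceNorm_eq, frob_norm_eq]
  calc ∑ i, Real.sqrt (lam A i) ≤ ∑ _i : Fin n, Real.sqrt (∑ j, lam A j) := by
        refine Finset.sum_le_sum fun i _ => Real.sqrt_le_sqrt ?_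
        exact Finset.single_le_sum (fun j _ => lam_nonneg A j) (Finset.mem_univ i)
    _ = (n : ℝ) * Real.sqrt (∑ j, lam A j) := by
        rw [Finset.sum_const, Finset.card_univ, Fintype.card_fin, nsmul_eq_mul]

lemma traceNorm_lipschitz : LipschitzWith (n : ℝ≥0) (traceNorm (n := n)) := by
  refine LipschitzWith.of_dist_le_mul fun a b => ?_
  rw [Real.dist_eq, dist_eq_norm]
  calc |traceNorm a - traceNorm b| ≤ traceNorm (a - b) := abs_traceNorm_sub_le a b
    _ ≤ (n : ℝ) * ‖a - b‖ := traceNorm_le_norm _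
    _ = ((n : ℝ≥0) : ℝ) * ‖a - b‖ := by norm_cast

lemma traceNorm_continuous : Continuous (traceNorm (n := n)) :=
  traceNorm_lipschitz.continuous

end frob
end TNAux

open TNAux

/-- Mozgunov–Lidar perturbation lemma. If `‖ℒ_t x‖₁ ≤ Λ‖x‖₁`,
`ẋ = ℒ_t x + ε`, `ẏ = ℒ_t y`, and `x(0) = y(0)`, then for `c > 0` and `0 ≤ t ≤ c/Λ`,
`‖x(t) − y(t)‖₁ ≤ (e^c − 1)‖ε‖₁/Λ`; equivalently
`‖x(t) − y(t)‖₁ ≤ (e^{Λt} − 1)‖ε‖₁/Λ` for all `t ≥ 0`. -/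
theorem mozgunov_lidar_perturbation
    {n : ℕ} (L : ℝ → Matrix (Fin n) (Fin n) ℂ →ₗ[ℂ] Matrix (Fin n) (Fin n) ℂ)
    (Λ : ℝ) (hΛ : 0 < Λ)
    (hL : ∀ t, 0 ≤ t → ∀ x : Matrix (Fin n) (Fin n) ℂ, traceNorm (L t x) ≤ Λ * traceNorm x)
    (ε : Matrix (Fin n) (Fin n) ℂ)
    (x y : ℝ → Matrix (Fin n) (Fin n) ℂ)
    (hx : ∀ t, 0 ≤ t → HasDerivAt x (L t (x t) + ε) t)
    (hy : ∀ t, 0 ≤ t → HasDerivAt y (L t (y t)) t)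
    (h0 : x 0 = y 0) :
    (∀ c : ℝ, 0 < c → ∀ t : ℝ, 0 ≤ t → t ≤ c / Λ →
        traceNorm (x t - y t) ≤ (Real.exp c - 1) * traceNorm ε / Λ) ∧
      (∀ t : ℝ, 0 ≤ t →
        traceNorm (x t - y t) ≤ (Real.exp (Λ * t) - 1) * traceNorm ε / Λ) := by
  classical
  set z : ℝ → Matrix (Fin n) (Fin n) ℂ := fun t => x t - y t with hzdef
  have hzderiv : ∀ t, 0 ≤ t → HasDerivAt z (L t (z t) + ε) t := by
    intro t ht
    have h := (hx t ht).sub (hy t ht)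
    have heq : L t (x t) + ε - L t (y t) = L t (z t) + ε := by
      rw [hzdef]
      simp only [map_sub]
      abel
    rw [heq] at h
    exact h
  have hεnn := traceNorm_nonneg (n := n) ε
  have key : ∀ T : ℝ, 0 ≤ T →
      traceNorm (z T) ≤ (Real.exp (Λ * T) - 1) * traceNorm ε / Λ := by
    intro T hT
    have hcont : ContinuousOn (fun s => traceNorm (z s)) (Set.Icc 0 T) := by
      refine traceNorm_continuous.comp_continuousOn (fun s hs => ?_)
      exact ((hzderiv s hs.1).continuousAt).continuousWithinAt
    have hbound : ∀ s ∈ Set.Ico 0 T,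
        traceNorm (L s (z s) + ε) ≤ Λ * traceNorm (z s) + traceNorm ε := by
      intro s hs
      calc traceNorm (L s (z s) + ε) ≤ traceNorm (L s (z s)) + traceNorm ε :=
            traceNorm_add_le _ _
        _ ≤ Λ * traceNorm (z s) + traceNorm ε := by linarith [hL s hs.1 (z s)]
    have ha : traceNorm (z 0) ≤ 0 := by
      rw [hzdef]
      simp only [h0, sub_self]
      rw [traceNorm_zero]
    have hslope : ∀ s ∈ Set.Ico 0 T, ∀ r, traceNorm (L s (z s) + ε) < r →
        ∃ᶠ w in nhdsWithin s (Set.Ioi s),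
          (w - s)⁻¹ * (traceNorm (z w) - traceNorm (z s)) < r := by
      intro s hs r hr
      set z' := L s (z s) + ε with hz'
      set D := traceNorm z' with hD
      set η : ℝ := (r - D) / (2 * ((n : ℝ) + 1)) with hη
      have hnpos : (0 : ℝ) < (n : ℝ) + 1 := by positivity
      have hηpos : 0 < η := by
        rw [hη]
        have : 0 < r - D := by linarith
        positivity
      have hnη : (n : ℝ) * η < r - D := by
        rw [hη]
        rw [div_eq_mul_inv, ← mul_assoc]
        rw [show (n : ℝ) * (r - D) * (2 * ((n:ℝ)+1))⁻¹ = (r - D) * ((n:ℝ) / (2 * ((n:ℝ)+1))) by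
          ring]
        have h1 : (n : ℝ) / (2 * ((n:ℝ)+1)) < 1 := by
          rw [div_lt_one (by positivity)]
          linarith
        nlinarith [sub_pos.mpr hr]
      have hlittle := (hasDerivAt_iff_isLittleO.mp (hzderiv s hs.1)).def hηpos
      have hev : ∀ᶠ w in nhdsWithin s (Set.Ioi s),
          ‖z w - z s - (w - s) • z'‖ ≤ η * ‖w - s‖ :=
        hlittle.filter_mono nhdsWithin_le_nhds
      refine Filter.Eventually.frequently ?_
      filter_upwards [hev, self_mem_nhdsWithin] with w hw hws
      have hwpos : 0 < w - s := sub_pos.mpr hws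
      have h1 : traceNorm (z w) - traceNorm (z s) ≤ traceNorm (z w - z s) :=
        traceNorm_sub_le _ _
      have h2 : traceNorm (z w - z s)
          ≤ traceNorm ((w - s) • z') + traceNorm (z w - z s - (w - s) • z') := by
        have := traceNorm_add_le ((w - s) • z') (z w - z s - (w - s) • z')
        rw [show (w - s) • z' + (z w - z s - (w - s) • z') = z w - z s by abel] at this
        exact this
      have h3 : traceNorm ((w - s) • z') = (w - s) * D := by
        rw [traceNorm_real_smul, abs_of_pos hwpos]
      have h4 : traceNorm (z w - z s - (w - s) • z') ≤ (n : ℝ) * (η * (w - s)) := by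
        calc traceNorm (z w - z s - (w - s) • z')
            ≤ (n : ℝ) * ‖z w - z s - (w - s) • z'‖ := traceNorm_le_norm _
          _ ≤ (n : ℝ) * (η * ‖w - s‖) := by
              exact mul_le_mul_of_nonneg_left hw (Nat.cast_nonneg n)
          _ = (n : ℝ) * (η * (w - s)) := by
              rw [Real.norm_eq_abs, abs_of_pos hwpos]
      have h5 : traceNorm (z w) - traceNorm (z s) < (w - s) * r := by
        have : traceNorm (z w) - traceNorm (z s) ≤ (w - s) * (D + (n : ℝ) * η) := by
          calc traceNorm (z w) - traceNorm (z s)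
              ≤ traceNorm ((w - s) • z') + traceNorm (z w - z s - (w - s) • z') :=
                le_trans h1 h2
            _ ≤ (w - s) * D + (n : ℝ) * (η * (w - s)) := by
                rw [h3]; linarith [h4]
            _ = (w - s) * (D + (n : ℝ) * η) := by ring
        have hlt : (w - s) * (D + (n : ℝ) * η) < (w - s) * r :=
          mul_lt_mul_of_pos_left (by linarith) hwpos
        linarith
      rw [inv_mul_lt_iff₀ hwpos, mul_comm]
      linarith
    have hgron := le_gronwallBound_of_liminf_deriv_right_le hcont hslope ha hbound T
      ⟨hT, le_refl T⟩
    rw [gronwallBound_of_K_ne_0 (ne_of_gt hΛ)] at hgron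
    simp only [zero_mul, zero_add, sub_zero] at hgron
    calc traceNorm (z T) ≤ traceNorm ε / Λ * (Real.exp (Λ * T) - 1) := hgron
      _ = (Real.exp (Λ * T) - 1) * traceNorm ε / Λ := by ring
  refine ⟨?_, fun t ht => key t ht⟩
  intro c hc t ht htle
  have h2 := key t ht
  have hΛt : Λ * t ≤ c := by
    rw [le_div_iff₀ hΛ] at htle
    linarith
  have hmono : Real.exp (Λ * t) ≤ Real.exp c := Real.exp_le_exp.mpr hΛt
  calc traceNorm (x t - y t) ≤ (Real.exp (Λ * t) - 1) * traceNorm ε / Λ := h2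
    _ ≤ (Real.exp c - 1) * traceNorm ε / Λ := by
        have hnum : (Real.exp (Λ * t) - 1) * traceNorm ε
            ≤ (Real.exp c - 1) * traceNorm ε :=
          mul_le_mul_of_nonneg_right (by linarith) hεnn
        exact (div_le_div_iff_of_pos_right hΛ).mpr hnum
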